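/- For real μ with |μ| ≥ 2, the subgroup of SL₂(ℝ) generated by A = [[1, μ], [0, 1]] and B = [[1, 0], [μ, 1]] is free on the generators A and B. -/

import Mathlib

open Matrix

namespace BrennerAux

lemma stepCore (c x y : ℝ) (hc : 2 ≤ |c|)
    (h : (|y| ≤ |x| ∧ 0 ≤ x * (c * y) ∧ x ≠ 0) ∨ |x| < |y|) :
    |y| < |x + c * y| ∧ 0 ≤ (x + c * y) * (c * y) := by
  have hx1 := abs_nonneg x
  have hy1 := abs_nonneg y
  have hs := abs_nonneg (x + c*y)
  have e1 : |x| * |x| = x * x := by rw [← abs_mul, abs_mul_self]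
  have e2 : |y| * |y| = y * y := by rw [← abs_mul, abs_mul_self]
  have e3 : |c*y| * |c*y| = (c*y) * (c*y) := by rw [← abs_mul, abs_mul_self]
  have hd : 2 * |y| ≤ |c * y| := by rw [abs_mul]; nlinarith
  have hxd : x * (c*y) ≤ |x| * |c*y| := (le_abs_self _).trans (le_of_eq (abs_mul _ _))
  have hxd' : -(|x| * |c*y|) ≤ x * (c*y) := by
    rw [← abs_mul]; exact neg_abs_le _
  have habs : ∀ u : ℝ, u^2 < (x + c*y)^2 → |u| < |x + c*y| := by
    intro u hu
    refine lt_of_pow_lt_pow_left₀ 2 hs ?_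
    rwa [sq_abs, sq_abs]
  rcases h with ⟨h1, h2, h3⟩ | h1
  · constructor
    · refine habs y ?_
      have hx0 : 0 < |x| := abs_pos.2 h3
      rcases eq_or_ne y 0 with rfl | hy0
      · simp only [mul_zero, add_zero]
        nlinarith
      · have hy0' : 0 < |y| := abs_pos.2 hy0
        have h4 : |y| * |y| ≤ |x| * |x| := mul_le_mul h1 h1 hy1 hx1
        nlinarith
    · nlinarith [mul_self_nonneg (c*y)]
  · have hy0' : 0 < |y| := lt_of_le_of_lt hx1 h1
    have hq : |y| < |c*y| - |x| := by linarith
    have h5 : |y| * |y| < (|c*y| - |x|) * (|c*y| - |x|) :=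
      mul_lt_mul' hq.le hq hy1 (lt_of_le_of_lt hy1 hq)
    constructor
    · refine habs y ?_; nlinarith
    · nlinarith

noncomputable def coef (μ : ℝ) (l : Fin 2 × Bool) : ℝ := if l.2 then μ else -μ

noncomputable def matOf (μ : ℝ) (l : Fin 2 × Bool) : Matrix (Fin 2) (Fin 2) ℝ :=
  if l.1 = 0 then !![1, coef μ l; 0, 1] else !![1, 0; coef μ l, 1]

def St (μ : ℝ) (l : Fin 2 × Bool) (v : Fin 2 → ℝ) : Prop :=
  if l.1 = 0 then |v 1| < |v 0| ∧ 0 ≤ v 0 * (coef μ l * v 1)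
  else |v 0| < |v 1| ∧ 0 ≤ v 1 * (coef μ l * v 0)

def Pre (μ : ℝ) (l : Fin 2 × Bool) (v : Fin 2 → ℝ) : Prop :=
  if l.1 = 0 then (|v 1| ≤ |v 0| ∧ 0 ≤ v 0 * (coef μ l * v 1) ∧ v 0 ≠ 0) ∨ |v 0| < |v 1|
  else (|v 0| ≤ |v 1| ∧ 0 ≤ v 1 * (coef μ l * v 0) ∧ v 1 ≠ 0) ∨ |v 1| < |v 0|

lemma abs_coef (μ : ℝ) (l : Fin 2 × Bool) : |coef μ l| = |μ| := by
  unfold coef; split <;> simp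

lemma matOf_mulVec (μ : ℝ) (l : Fin 2 × Bool) (v : Fin 2 → ℝ) :
    matOf μ l *ᵥ v = if l.1 = 0 then ![v 0 + coef μ l * v 1, v 1]
      else ![v 0, v 1 + coef μ l * v 0] := by
  unfold matOf
  split <;> (funext i; fin_cases i <;>
    simp [mulVec, dotProduct, Fin.sum_univ_two] <;> ring)

lemma step (μ : ℝ) (hμ : 2 ≤ |μ|) (l : Fin 2 × Bool) (v : Fin 2 → ℝ)
    (h : Pre μ l v) : St μ l (matOf μ l *ᵥ v) := by
  have hc : 2 ≤ |coef μ l| := by rw [abs_coef]; exact hμ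
  rw [matOf_mulVec]
  unfold Pre St at *
  by_cases h0 : l.1 = 0
  · rw [if_pos h0] at h
    rw [if_pos h0, if_pos h0]
    simpa using stepCore (coef μ l) (v 0) (v 1) hc h
  · rw [if_neg h0] at h
    rw [if_neg h0, if_neg h0]
    simpa using stepCore (coef μ l) (v 1) (v 0) hc h

lemma compat (μ : ℝ) (a b : Fin 2 × Bool) (hab : b ≠ (a.1, !a.2)) (v : Fin 2 → ℝ)
    (h : St μ b v) : Pre μ a v := by
  unfold St at h; unfold Pre
  by_cases ha : a.1 = 0 <;> by_cases hb : b.1 = 0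
  · rw [if_pos hb] at h
    rw [if_pos ha]
    obtain ⟨hlt, hsg⟩ := h
    have hba : b = a := by
      have h1 : b.1 = a.1 := by rw [ha, hb]
      have h2 : b.2 = a.2 := by
        by_contra hne
        exact hab (Prod.ext h1 (Bool.eq_not_iff.mpr hne))
      exact Prod.ext h1 h2
    subst hba
    have hv0 : v 0 ≠ 0 := by
      have : 0 < |v 0| := lt_of_le_of_lt (abs_nonneg _) hlt
      exact abs_pos.mp this
    exact Or.inl ⟨hlt.le, hsg, hv0⟩
  · rw [if_neg hb] at h
    rw [if_pos ha]
    exact Or.inr h.1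
  · rw [if_pos hb] at h
    rw [if_neg ha]
    exact Or.inr h.1
  · rw [if_neg hb] at h
    rw [if_neg ha]
    obtain ⟨hlt, hsg⟩ := h
    have hba : b = a := by
      have h1 : b.1 = a.1 := by omega
      have h2 : b.2 = a.2 := by
        by_contra hne
        exact hab (Prod.ext h1 (Bool.eq_not_iff.mpr hne))
      exact Prod.ext h1 h2
    subst hba
    have hv1 : v 1 ≠ 0 := by
      have : 0 < |v 1| := lt_of_le_of_lt (abs_nonneg _) hlt
      exact abs_pos.mp this
    exact Or.inl ⟨hlt.le, hsg, hv1⟩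

lemma key (μ : ℝ) (hμ : 2 ≤ |μ|) :
    ∀ (L : List (Fin 2 × Bool)) (hL : L ≠ [])
      (_ : L.Chain' (fun a b => b ≠ (a.1, !a.2)))
      (v : Fin 2 → ℝ) (_ : Pre μ (L.getLast hL) v),
      St μ (L.head hL) ((L.map (matOf μ)).prod *ᵥ v) := by
  intro L
  induction L with
  | nil => intro h; exact absurd rfl h
  | cons a t ih =>
    intro _ hred v hv
    cases t with
    | nil =>
      simp only [List.map_cons, List.map_nil, List.prod_cons, List.prod_nil, mul_one,
        List.head_cons]
      exact step μ hμ a v (by simpa using hv)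
    | cons b t' =>
      have hab : b ≠ (a.1, !a.2) := (List.isChain_cons_cons.mp hred).1
      have hne : (b :: t') ≠ [] := by simp
      have hlast : (a :: b :: t').getLast (by simp) = (b :: t').getLast hne :=
        List.getLast_cons hne
      have ihs := ih hne (List.isChain_cons_cons.mp hred).2 v (by rw [← hlast]; exact hv)
      have hprod : ((a :: b :: t').map (matOf μ)).prod
          = matOf μ a * ((b :: t').map (matOf μ)).prod := by
        simp [List.map_cons, List.prod_cons]
      rw [List.head_cons, hprod, ← Matrix.mulVec_mulVec]
      exact step μ hμ a _ (compat μ a ((b :: t').head hne) (by rwa [List.head_cons]) _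
        (by rwa [List.head_cons]))

noncomputable def baseVec (μ : ℝ) (l : Fin 2 × Bool) : Fin 2 → ℝ :=
  if l.1 = 0 then ![1, if 0 ≤ coef μ l then 1 else -1]
  else ![if 0 ≤ coef μ l then 1 else -1, 1]

lemma pre_baseVec (μ : ℝ) (l : Fin 2 × Bool) : Pre μ l (baseVec μ l) := by
  unfold Pre baseVec
  by_cases h0 : l.1 = 0 <;> [simp only [if_pos h0]; simp only [if_neg h0]] <;>
  · left
    by_cases hc : 0 ≤ coef μ l <;>
      simp only [hc, if_true, if_false, Matrix.cons_val_zero, Matrix.cons_val_one,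
        Matrix.head_cons, ite_false, ite_true] <;>
      norm_num <;> linarith

lemma abs_baseVec (μ : ℝ) (l : Fin 2 × Bool) :
    |baseVec μ l 0| = 1 ∧ |baseVec μ l 1| = 1 := by
  unfold baseVec
  by_cases h0 : l.1 = 0 <;> by_cases hc : 0 ≤ coef μ l <;> simp [h0, hc]

lemma st_not_eq_abs (μ : ℝ) (l : Fin 2 × Bool) (v : Fin 2 → ℝ)
    (hv : |v 0| = |v 1|) (h : St μ l v) : False := by
  unfold St at h
  by_cases h0 : l.1 = 0
  · rw [if_pos h0] at h; rw [hv] at h; exact lt_irrefl _ h.1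
  · rw [if_neg h0] at h; rw [hv] at h; exact lt_irrefl _ h.1

lemma chain'_of_no_infix {α : Type*} :
    ∀ (L : List (α × Bool)),
      (∀ (L₂ L₃ : List (α × Bool)) (x : α) (b : Bool), L ≠ L₂ ++ (x, b) :: (x, !b) :: L₃) →
      L.Chain' (fun a b => b ≠ (a.1, !a.2)) := by
  intro L
  induction L with
  | nil => intro _; exact List.isChain_nil
  | cons a t ih =>
    intro h
    cases t with
    | nil => exact List.isChain_singleton a
    | cons b t' =>
      refine List.isChain_cons_cons.mpr ⟨?_, ih ?_⟩
      · intro hb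
        exact h [] t' a.1 a.2 (by rw [hb]; rfl)
      · intro L₂ L₃ x bb hEq
        exact h (a :: L₂) L₃ x bb (by rw [hEq]; rfl)

def coeHom : Matrix.SpecialLinearGroup (Fin 2) ℝ →* Matrix (Fin 2) (Fin 2) ℝ where
  toFun := fun M => (M : Matrix (Fin 2) (Fin 2) ℝ)
  map_one' := Matrix.SpecialLinearGroup.coe_one
  map_mul' := Matrix.SpecialLinearGroup.coe_mul

lemma letter_eq (μ : ℝ) (A B : Matrix.SpecialLinearGroup (Fin 2) ℝ)
    (hA : (A : Matrix (Fin 2) (Fin 2) ℝ) = !![1, μ; 0, 1])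
    (hB : (B : Matrix (Fin 2) (Fin 2) ℝ) = !![1, 0; μ, 1]) (l : Fin 2 × Bool) :
    ((cond l.2 (![A, B] l.1) (![A, B] l.1)⁻¹ : Matrix.SpecialLinearGroup (Fin 2) ℝ) :
      Matrix (Fin 2) (Fin 2) ℝ) = matOf μ l := by
  obtain ⟨i, b⟩ := l
  have hAi : ((A⁻¹ : Matrix.SpecialLinearGroup (Fin 2) ℝ) : Matrix (Fin 2) (Fin 2) ℝ)
      = !![1, -μ; 0, 1] := by
    rw [Matrix.SpecialLinearGroup.coe_inv, hA, Matrix.adjugate_fin_two_of]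
    norm_num
  have hBi : ((B⁻¹ : Matrix.SpecialLinearGroup (Fin 2) ℝ) : Matrix (Fin 2) (Fin 2) ℝ)
      = !![1, 0; -μ, 1] := by
    rw [Matrix.SpecialLinearGroup.coe_inv, hB, Matrix.adjugate_fin_two_of]
    norm_num
  fin_cases i <;> cases b <;>
    simp [matOf, coef, hA, hB, hAi, hBi]

end BrennerAux

/-- Brenner's theorem: for `|μ| ≥ 2`, the parabolic matrices
`A = [[1, μ], [0, 1]]` and `B = [[1, 0], [μ, 1]]` generate a free subgroup
of `SL₂(ℝ)`, freely on these two generators: the homomorphism from the free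
group on two generators sending the generators to `A` and `B` is injective. -/
theorem stmt1 (μ : ℝ) (hμ : 2 ≤ |μ|)
    (A B : Matrix.SpecialLinearGroup (Fin 2) ℝ)
    (hA : (A : Matrix (Fin 2) (Fin 2) ℝ) = !![1, μ; 0, 1])
    (hB : (B : Matrix (Fin 2) (Fin 2) ℝ) = !![1, 0; μ, 1]) :
    Function.Injective (FreeGroup.lift ![A, B] : FreeGroup (Fin 2) →* Matrix.SpecialLinearGroup (Fin 2) ℝ) := by
  open BrennerAux in
  refine (injective_iff_map_eq_one _).mpr ?_
  intro g hg
  by_contra hne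
  set L := g.toWord with hLdef
  have hL : L ≠ [] := fun h => hne (FreeGroup.toWord_eq_nil_iff.mp h)
  have hchain : L.Chain' (fun a b => b ≠ (a.1, !a.2)) := by
    refine chain'_of_no_infix L ?_
    intro L₂ L₃ x b hEq
    exact FreeGroup.reduce.not (L₁ := L) (by rw [FreeGroup.reduce_toWord]; exact hEq)
  have hmat : ((FreeGroup.lift ![A, B] g : Matrix.SpecialLinearGroup (Fin 2) ℝ) :
      Matrix (Fin 2) (Fin 2) ℝ) = (L.map (matOf μ)).prod := by
    conv_lhs => rw [← FreeGroup.mk_toWord (x := g)]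
    rw [FreeGroup.lift_mk]
    have : ((List.prod (L.map fun x => cond x.2 (![A, B] x.1) (![A, B] x.1)⁻¹) :
        Matrix.SpecialLinearGroup (Fin 2) ℝ) : Matrix (Fin 2) (Fin 2) ℝ)
        = ((L.map fun x => cond x.2 (![A, B] x.1) (![A, B] x.1)⁻¹).map coeHom).prod := by
      rw [← map_list_prod coeHom]; rfl
    rw [this, List.map_map]
    congr 1
    refine List.map_congr_left ?_
    intro l _
    exact letter_eq μ A B hA hB l
  rw [hg, Matrix.SpecialLinearGroup.coe_one] at hmat
  have hst := key μ hμ L hL hchain (baseVec μ (L.getLast hL))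
    (pre_baseVec μ (L.getLast hL))
  rw [← hmat, Matrix.one_mulVec] at hst
  obtain ⟨h0, h1⟩ := abs_baseVec μ (L.getLast hL)
  exact st_not_eq_abs μ (L.head hL) _ (by rw [h0, h1]) hst
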